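/- Fix 0 ≤ s ≤ k and a subset J ⊆ {1, …, m} with J ∩ {1, …, s} = ∅ and {s+1, …, k} ⊆ J (the indices of the ray generators of a face γ of σ containing p_{s+1}, …, p_k but not p_1, …, p_s). Assume: (i) there exists m_0 ∈ ℤ^n with ⟨q_j, m_0⟩ = 0 for all j ∈ J and ⟨q_j, m_0⟩ > 0 for all j ∉ J (γ is a face of σ); (ii) for each r = 1, …, s there is a vector e^{(r)} ∈ ℤ^n with ⟨p_i, e^{(r)}⟩ = −δ_{ir} for all i ≤ k, ⟨q_j, e^{(r)}⟩ ≥ 0 for all j > k, and ⟨q_j, e^{(r)}⟩ = 0 for all j ∈ J (a Demazure root compatible with τ lying in γ^⊥). Then there exists m' ∈ ℤ^n with ⟨q_j, m'⟩ = 0 for all j ∈ J ∪ {1, …, s} and ⟨q_j, m'⟩ > 0 for all j ∉ J ∪ {1, …, s}. (This is Lemma 7.2: cone(p_1, …, p_s, γ) is a face of the cone σ.) -/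
import Mathlib


open Finset

def pairZ {n : ℕ} (v u : Fin n → ℤ) : ℤ := ∑ i, v i * u i

lemma pairZ_add_sum {n : ℕ} {s : ℕ} (v u : Fin n → ℤ) (w : Fin s → Fin n → ℤ) :
    pairZ v (fun i => u i + ∑ r, w r i) = pairZ v u + ∑ r, pairZ v (w r) := by
  simp only [pairZ, mul_add, Finset.sum_add_distrib, Finset.mul_sum]
  congr 1
  rw [Finset.sum_comm]

lemma pairZ_smul {n : ℕ} (v : Fin n → ℤ) (c : ℤ) (w : Fin n → ℤ) :
    pairZ v (fun i => c * w i) = c * pairZ v w := by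
  simp [pairZ, Finset.mul_sum, mul_left_comm]

theorem statement_10 {n m k : ℕ} (hn : 1 ≤ n) (hk : 1 ≤ k) (hkm : k ≤ m)
    (q : Fin m → Fin n → ℤ)
    (s : ℕ) (hs : s ≤ k) (J : Finset (Fin m))
    (hJs : ∀ j ∈ J, ¬ (j : ℕ) < s)
    (hJk : ∀ j : Fin m, s ≤ (j : ℕ) → (j : ℕ) < k → j ∈ J)
    (hface : ∃ m0 : Fin n → ℤ, (∀ j ∈ J, pairZ (q j) m0 = 0) ∧
      ∀ j ∉ J, 0 < pairZ (q j) m0)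
    (e : Fin s → Fin n → ℤ)
    (he1 : ∀ (r : Fin s) (i : Fin k), pairZ (q (Fin.castLE hkm i)) (e r) =
      if (i : ℕ) = (r : ℕ) then -1 else 0)
    (he2 : ∀ (r : Fin s) (j : Fin m), k ≤ (j : ℕ) → 0 ≤ pairZ (q j) (e r))
    (he3 : ∀ (r : Fin s), ∀ j ∈ J, pairZ (q j) (e r) = 0) :
    ∃ m' : Fin n → ℤ,
      (∀ j : Fin m, (j ∈ J ∨ (j : ℕ) < s) → pairZ (q j) m' = 0) ∧
      ∀ j : Fin m, j ∉ J → ¬ (j : ℕ) < s → 0 < pairZ (q j) m' := by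
  obtain ⟨m0, hm0J, hm0pos⟩ := hface
  have hsm : s ≤ m := hs.trans hkm
  set c : Fin s → ℤ := fun r => pairZ (q (Fin.castLE hsm r)) m0 with hc
  -- key expansion
  have expand : ∀ j : Fin m,
      pairZ (q j) (fun i => m0 i + ∑ r, c r * e r i)
      = pairZ (q j) m0 + ∑ r, c r * pairZ (q j) (e r) := by
    intro j
    rw [pairZ_add_sum (q j) m0 (fun r i => c r * e r i)]
    congr 1
    exact Finset.sum_congr rfl fun r _ => pairZ_smul (q j) (c r) (e r)
  have hcpos : ∀ r : Fin s, 0 < c r := by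
    intro r
    apply hm0pos
    intro hmem
    exact hJs _ hmem (by simp [r.isLt])
  refine ⟨fun i => m0 i + ∑ r, c r * e r i, ?_, ?_⟩
  · rintro j (hj | hj)
    · rw [expand, hm0J j hj]
      have : ∀ r : Fin s, c r * pairZ (q j) (e r) = 0 := fun r => by
        rw [he3 r j hj, mul_zero]
      simp [this]
    · -- j.val < s
      rw [expand]
      have hjk : (j : ℕ) < k := lt_of_lt_of_le hj hs
      have hqj : ∀ r : Fin s, pairZ (q j) (e r) = if (j : ℕ) = (r : ℕ) then -1 else 0 := by
        intro r
        have := he1 r ⟨(j : ℕ), hjk⟩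
        have hcast : Fin.castLE hkm ⟨(j : ℕ), hjk⟩ = j := by ext; rfl
        rwa [hcast] at this
      have hsum : ∑ r : Fin s, c r * pairZ (q j) (e r) = - c ⟨(j : ℕ), hj⟩ := by
        rw [Finset.sum_eq_single (⟨(j : ℕ), hj⟩ : Fin s)]
        · rw [hqj]; simp
        · intro r _ hr
          rw [hqj]
          have : ¬ ((j : ℕ) = (r : ℕ)) := by
            intro h
            exact hr (by ext; exact h.symm)
          simp [this]
        · simp
      rw [hsum]
      have : Fin.castLE hsm ⟨(j : ℕ), hj⟩ = j := by ext; rfl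
      simp [hc, this]
  · intro j hjJ hjs
    rw [expand]
    have hjk : k ≤ (j : ℕ) := by
      by_contra h
      push_neg at h
      exact hjJ (hJk j (le_of_not_gt hjs) h)
    have hpos : 0 < pairZ (q j) m0 := hm0pos j hjJ
    have hnn : 0 ≤ ∑ r : Fin s, c r * pairZ (q j) (e r) :=
      Finset.sum_nonneg fun r _ => mul_nonneg (hcpos r).le (he2 r j hjk)
    linarith
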